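/- For an integer n with n ≠ 1, the quotient of the additive group ℤ[1/n] by the image of the endomorphism x ↦ (1−n)·x is isomorphic to ℤ/(n−1)ℤ, a cyclic group of order |n−1|. -/

import Mathlib

/-- `ℤ[1/n]`: the additive subgroup of `ℚ` of fractions `m / n ^ k`. -/
def Zn (n : ℤ) : AddSubgroup ℚ :=
  AddSubgroup.closure {q : ℚ | ∃ (m : ℤ) (k : ℕ), q = (m : ℚ) / (n : ℚ) ^ k}

/-- The endomorphism of `ℤ[1/n]` given by multiplication by `1 - n`. -/
def oneSubNSmul (n : ℤ) : Zn n →+ Zn n :=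
  AddMonoidHom.mk' (fun x => (1 - n) • x) (fun a b => smul_add (1 - n) a b)

lemma int_mem_Zn (n m : ℤ) : (m : ℚ) ∈ Zn n := by
  apply AddSubgroup.subset_closure
  exact ⟨m, 0, by simp⟩

/-- membership characterization when `n ≠ 0` -/
lemma mem_Zn_iff {n : ℤ} (hn : n ≠ 0) {x : ℚ} :
    x ∈ Zn n ↔ ∃ (m : ℤ) (k : ℕ), x = (m : ℚ) / (n : ℚ) ^ k := by
  have hnq : (n : ℚ) ≠ 0 := Int.cast_ne_zero.mpr hn
  constructor
  · intro hx
    induction hx using AddSubgroup.closure_induction with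
    | mem y hy => exact hy
    | zero => exact ⟨0, 0, by simp⟩
    | add a b _ _ ha hb =>
      obtain ⟨m, k, rfl⟩ := ha
      obtain ⟨m', k', rfl⟩ := hb
      refine ⟨m * n ^ k' + m' * n ^ k, k + k', ?_⟩
      push_cast
      rw [div_add_div _ _ (pow_ne_zero k hnq) (pow_ne_zero k' hnq), pow_add]
      ring_nf
    | neg a _ ha =>
      obtain ⟨m, k, rfl⟩ := ha
      exact ⟨-m, k, by push_cast; ring⟩
  · rintro ⟨m, k, rfl⟩
    exact AddSubgroup.subset_closure ⟨m, k, rfl⟩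

/-- the hom `ℤ →+ Zn n` -/
def intToZn (n : ℤ) : ℤ →+ Zn n where
  toFun m := ⟨(m : ℚ), int_mem_Zn n m⟩
  map_zero' := by ext; simp
  map_add' a b := by ext; push_cast; ring

/-- For `n ≠ 1`, the quotient of `ℤ[1/n]` by the image of `x ↦ (1 - n) • x` is
isomorphic to `ℤ/(n-1)ℤ`, the cyclic group of order `|n - 1|`. -/
theorem quotient_iso_zmod (n : ℤ) (hn : n ≠ 1) :
    Nonempty ((Zn n ⧸ (oneSubNSmul n).range) ≃+ ZMod (n - 1).natAbs) := by
  by_cases hn0 : n = 0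
  · -- quotient is trivial and `ZMod 1` is trivial
    subst hn0
    have hsub : Subsingleton (Zn 0 ⧸ (oneSubNSmul 0).range) := by
      constructor
      intro a b
      induction a using QuotientAddGroup.induction_on with | H a =>
      induction b using QuotientAddGroup.induction_on with | H b =>
      rw [QuotientAddGroup.eq_iff_sub_mem]
      exact ⟨a - b, by simp [oneSubNSmul]⟩
    have h1 : ((0 : ℤ) - 1).natAbs = 1 := rfl
    rw [h1]
    exact ⟨AddEquiv.mk'
      ⟨fun _ => 0, fun _ => 0, fun _ => Subsingleton.elim _ _, fun _ => Subsingleton.elim _ _⟩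
      (fun _ _ => Subsingleton.elim _ _)⟩
  · have hnq : (n : ℚ) ≠ 0 := Int.cast_ne_zero.mpr hn0
    set ψ : ℤ →+ Zn n ⧸ (oneSubNSmul n).range :=
      (QuotientAddGroup.mk' (oneSubNSmul n).range).comp (intToZn n) with hψ
    -- surjectivity
    have hsurj : Function.Surjective ψ := by
      intro q
      induction q using QuotientAddGroup.induction_on with | H x =>
      obtain ⟨x, hx⟩ := x
      obtain ⟨m, k, rfl⟩ := (mem_Zn_iff hn0).mp hx
      refine ⟨m, ?_⟩
      have hmem : (-(m * (∑ i ∈ Finset.range k, n ^ i)) : ℚ) / (n : ℚ) ^ k ∈ Zn n := by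
        rw [mem_Zn_iff hn0]
        exact ⟨-(m * (∑ i ∈ Finset.range k, n ^ i)), k, by push_cast; ring⟩
      have key : ((1 : ℤ) - n) • ((-(m * (∑ i ∈ Finset.range k, n ^ i)) : ℚ) / (n : ℚ) ^ k)
          = (m : ℚ) - (m : ℚ) / (n : ℚ) ^ k := by
        have hg : ((∑ i ∈ Finset.range k, (n : ℚ) ^ i)) * ((n : ℚ) - 1)
            = (n : ℚ) ^ k - 1 := geom_sum_mul _ _
        rw [zsmul_eq_mul]
        push_cast
        rw [← mul_div_assoc, div_eq_iff (pow_ne_zero k hnq)]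
        conv_rhs => rw [sub_mul, div_mul_cancel₀ _ (pow_ne_zero k hnq)]
        linear_combination (m : ℚ) * hg
      show ψ m = _
      simp only [hψ, AddMonoidHom.comp_apply, QuotientAddGroup.mk'_apply]
      rw [QuotientAddGroup.eq_iff_sub_mem]
      refine ⟨⟨_, hmem⟩, ?_⟩
      apply Subtype.ext
      show ((1 : ℤ) - n) • ((-(m * (∑ i ∈ Finset.range k, n ^ i)) : ℚ) / (n : ℚ) ^ k)
          = ((intToZn n m : Zn n) : ℚ) - _
      rw [key]
      rfl
    -- kernel
    have hker : ψ.ker = AddSubgroup.zmultiples (n - 1) := by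
      ext m
      rw [Int.mem_zmultiples_iff, AddMonoidHom.mem_ker]
      simp only [hψ, AddMonoidHom.comp_apply, QuotientAddGroup.mk'_apply]
      rw [QuotientAddGroup.eq_zero_iff]
      constructor
      · rintro ⟨⟨y, hy⟩, hxy⟩
        obtain ⟨m', k, rfl⟩ := (mem_Zn_iff hn0).mp hy
        have hval : ((1 : ℤ) - n) • ((m' : ℚ) / (n : ℚ) ^ k) = (m : ℚ) :=
          congrArg Subtype.val hxy
        have hint : (m : ℚ) * (n : ℚ) ^ k = ((1 : ℤ) - n) * (m' : ℚ) := by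
          rw [← hval, zsmul_eq_mul]; push_cast; field_simp
        have hint2 : m * n ^ k = (1 - n) * m' := by
          exact_mod_cast hint
        have hdvd1 : (n - 1) ∣ n ^ k - 1 := by
          simpa using sub_dvd_pow_sub_pow n 1 k
        have : (n - 1) ∣ m * n ^ k := hint2 ▸ ⟨-m', by ring⟩
        have : (n - 1) ∣ m * (n ^ k) - m * (n ^ k - 1) := by
          exact dvd_sub this (Dvd.dvd.mul_left hdvd1 m)
        simpa [mul_sub] using this
      · rintro ⟨c, rfl⟩
        refine ⟨intToZn n (-c), ?_⟩
        apply Subtype.ext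
        show ((1 : ℤ) - n) • ((-c : ℤ) : ℚ) = (((n - 1) * c : ℤ) : ℚ)
        rw [zsmul_eq_mul]
        push_cast
        ring
    exact ⟨((QuotientAddGroup.quotientKerEquivOfSurjective ψ hsurj).symm.trans
      (QuotientAddGroup.quotientAddEquivOfEq hker)).symm.symm.trans
      (Int.quotientZMultiplesEquivZMod (n - 1))⟩
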